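/- arXiv:1110.1861 — 2 statements merged into one kernel-verified Lean document; each statement's English description precedes it below -/
import Mathlib

section
/- Let K be a field and c ∈ ℤⁿ with c⁺ ≠ 0 and c⁻ ≠ 0. Let I ⊆ S = K[x₁,…,xₙ] be an ideal homogeneous with respect to the ℤⁿ/ℤc-grading, let ≺ and ≺' be term orders with x^{c⁺} ≺ x^{c⁻} and x^{c⁺} ≻' x^{c⁻}, set M = in_≺(I) and N = in_{≺'}(I), and let f : Mon(M) → Mon(N) be the map f(m) = max_≺ { in_{≺'}(p) : p ∈ I homogeneous with in_≺(p) = m }. If p ∈ I is a homogeneous polynomial with in_≺(p) = m and in_{≺'}(p) = m', then there exists a monomial m̃ ∈ Mon(M) with m̃ ⪯ m and f(m̃) = m'; in particular d(m̃, m') ≤ d(m, m'). -/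
open MvPolynomial

/-- A term order on the monomial exponents of `K[x₁,…,xₙ]`: a strict total order on
`Fin n →₀ ℕ` with `0` smallest and compatible with addition. -/
def IsTermOrder (n : ℕ) (lt : (Fin n →₀ ℕ) → (Fin n →₀ ℕ) → Prop) : Prop :=
  (∀ u v : Fin n →₀ ℕ, lt u v ∨ u = v ∨ lt v u) ∧
  (∀ u v w : Fin n →₀ ℕ, lt u v → lt v w → lt u w) ∧
  (∀ u : Fin n →₀ ℕ, ¬ lt u u) ∧
  (∀ u : Fin n →₀ ℕ, u ≠ 0 → lt 0 u) ∧
  (∀ u v w : Fin n →₀ ℕ, lt u v → lt (u + w) (v + w))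

/-- `u` is the exponent of the `lt`-leading monomial `in_≺(f)` of `f`. -/
def IsLeadExp {n : ℕ} {K : Type*} [Field K] (lt : (Fin n →₀ ℕ) → (Fin n →₀ ℕ) → Prop)
    (f : MvPolynomial (Fin n) K) (u : Fin n →₀ ℕ) : Prop :=
  u ∈ f.support ∧ ∀ v ∈ f.support, v ≠ u → lt v u

/-- The initial ideal `in_≺(I)`, generated by the leading monomials of nonzero elements. -/
noncomputable def initialIdeal {n : ℕ} {K : Type*} [Field K]
    (lt : (Fin n →₀ ℕ) → (Fin n →₀ ℕ) → Prop) (I : Ideal (MvPolynomial (Fin n) K)) :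
    Ideal (MvPolynomial (Fin n) K) :=
  Ideal.span { p | ∃ f ∈ I, ∃ u, IsLeadExp lt f u ∧ p = monomial u 1 }

/-- `DistRel c u v ℓ` says that `u - v = ℓ·c` in `ℤⁿ`; then `d(x^u, x^v) = |ℓ|`. -/
def DistRel {n : ℕ} (c : Fin n → ℤ) (u v : Fin n →₀ ℕ) (ℓ : ℤ) : Prop :=
  ∀ i, (u i : ℤ) - (v i : ℤ) = ℓ * c i

/-- Two monomials have the same degree in the `ℤⁿ/ℤc`-grading iff `u - v ∈ ℤc`. -/
def SameDeg {n : ℕ} (c : Fin n → ℤ) (u v : Fin n →₀ ℕ) : Prop :=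
  ∃ ℓ : ℤ, DistRel c u v ℓ

/-- A polynomial is homogeneous for the `ℤⁿ/ℤc`-grading if all of its monomials
have the same degree. -/
def CHom {n : ℕ} {K : Type*} [Field K] (c : Fin n → ℤ) (f : MvPolynomial (Fin n) K) : Prop :=
  ∀ u ∈ f.support, ∀ v ∈ f.support, SameDeg c u v

/-- An ideal is homogeneous for the `ℤⁿ/ℤc`-grading if it is generated by homogeneous
elements. -/
def CHomIdeal {n : ℕ} {K : Type*} [Field K] (c : Fin n → ℤ)
    (I : Ideal (MvPolynomial (Fin n) K)) : Prop :=
  ∃ G : Set (MvPolynomial (Fin n) K), (∀ g ∈ G, CHom c g) ∧ I = Ideal.span G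

/-- The exponent vector `c⁺` of a vector `c ∈ ℤⁿ`. -/
noncomputable def cpos {n : ℕ} (c : Fin n → ℤ) : Fin n →₀ ℕ :=
  Finsupp.equivFunOnFinite.symm fun i => (c i).toNat

/-- The exponent vector `c⁻` of a vector `c ∈ ℤⁿ`. -/
noncomputable def cneg {n : ℕ} (c : Fin n → ℤ) : Fin n →₀ ℕ :=
  Finsupp.equivFunOnFinite.symm fun i => (-(c i)).toNat

/-- `Mon M`: the set of (exponents of) monomials lying in `M`. -/
def Mon {n : ℕ} {K : Type*} [Field K] (M : Ideal (MvPolynomial (Fin n) K)) :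
    Set (Fin n →₀ ℕ) :=
  { u | monomial u 1 ∈ M }

/-- `f` (as a map on exponent vectors) restricts to an arrow map `Mon M → Mon N`
with respect to the `ℤⁿ/ℤc`-grading and the term order `lt`:
(1) it is a degree-preserving bijection with `m ⪰ f(m)`;
(2) `d(m', f(m')) ≤ d(m, f(m))` for every multiple `m'` of `m ∈ Mon M`;
(3) `d(f⁻¹(m'), m') ≤ d(f⁻¹(m), m)` for every `m ∈ Mon N` and multiple `m'` of `m`. -/
def IsArrowMap {n : ℕ} {K : Type*} [Field K] (c : Fin n → ℤ)
    (lt : (Fin n →₀ ℕ) → (Fin n →₀ ℕ) → Prop)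
    (M N : Ideal (MvPolynomial (Fin n) K)) (f : (Fin n →₀ ℕ) → (Fin n →₀ ℕ)) : Prop :=
  Set.BijOn f (Mon M) (Mon N) ∧
  (∀ u ∈ Mon M, SameDeg c u (f u)) ∧
  (∀ u ∈ Mon M, f u = u ∨ lt (f u) u) ∧
  (∀ u ∈ Mon M, ∀ (w : Fin n →₀ ℕ) (ℓ ℓ' : ℤ),
    DistRel c u (f u) ℓ → DistRel c (u + w) (f (u + w)) ℓ' → |ℓ'| ≤ |ℓ|) ∧
  (∀ u ∈ Mon M, ∀ u' ∈ Mon M, ∀ (w : Fin n →₀ ℕ) (ℓ ℓ' : ℤ),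
    f u' = f u + w → DistRel c u (f u) ℓ → DistRel c u' (f u') ℓ' → |ℓ'| ≤ |ℓ|)

/-- `OppLead c lt lt' I u v`: there is a homogeneous `p ∈ I` with `in_≺(p) = x^u` and
`in_≺'(p) = x^v`. -/
def OppLead {n : ℕ} {K : Type*} [Field K] (c : Fin n → ℤ)
    (lt lt' : (Fin n →₀ ℕ) → (Fin n →₀ ℕ) → Prop)
    (I : Ideal (MvPolynomial (Fin n) K)) (u v : Fin n →₀ ℕ) : Prop :=
  ∃ p ∈ I, CHom c p ∧ IsLeadExp lt p u ∧ IsLeadExp lt' p v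

/-- `v = max_≺ { in_≺'(p) : p ∈ I homogeneous with in_≺(p) = x^u }`. -/
def MaxOppLead {n : ℕ} {K : Type*} [Field K] (c : Fin n → ℤ)
    (lt lt' : (Fin n →₀ ℕ) → (Fin n →₀ ℕ) → Prop)
    (I : Ideal (MvPolynomial (Fin n) K)) (u v : Fin n →₀ ℕ) : Prop :=
  OppLead c lt lt' I u v ∧ ∀ v', OppLead c lt lt' I u v' → v' = v ∨ lt v' v

section Helpers

private lemma to_asymm {n : ℕ} {lt : (Fin n →₀ ℕ) → (Fin n →₀ ℕ) → Prop}
    (h : IsTermOrder n lt) {a b : Fin n →₀ ℕ} (h1 : lt a b) (h2 : lt b a) : False :=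
  h.2.2.1 a (h.2.1 a b a h1 h2)

private lemma to_cancel {n : ℕ} {lt : (Fin n →₀ ℕ) → (Fin n →₀ ℕ) → Prop}
    (h : IsTermOrder n lt) {a b w : Fin n →₀ ℕ} (hw : lt (a + w) (b + w)) : lt a b := by
  rcases h.1 a b with h1 | rfl | h1
  · exact h1
  · exact absurd hw (h.2.2.1 _)
  · exact absurd (h.2.2.2.2 _ _ w h1) (fun h2 => to_asymm h hw h2)

private lemma to_smul_lt {n : ℕ} {lt : (Fin n →₀ ℕ) → (Fin n →₀ ℕ) → Prop}
    (h : IsTermOrder n lt) {a b : Fin n →₀ ℕ} (hab : lt a b) :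
    ∀ m : ℕ, lt ((m + 1) • a) ((m + 1) • b) := by
  intro m
  induction m with
  | zero => simpa using hab
  | succ k ih =>
    have h1 : lt ((k + 1) • a + a) ((k + 1) • b + a) := h.2.2.2.2 _ _ _ ih
    have h2 : lt ((k + 1) • b + a) ((k + 1) • b + b) := by
      have := h.2.2.2.2 _ _ ((k + 1) • b) hab
      rwa [add_comm a, add_comm b] at this
    have h3 := h.2.1 _ _ _ h1 h2
    rw [succ_nsmul a (k + 1), succ_nsmul b (k + 1)]
    exact h3

private lemma dist_lt {n : ℕ} {c : Fin n → ℤ} {lt : (Fin n →₀ ℕ) → (Fin n →₀ ℕ) → Prop}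
    (h : IsTermOrder n lt) (hlo : lt (cpos c) (cneg c)) {a b : Fin n →₀ ℕ} {ℓ : ℤ}
    (hd : DistRel c a b ℓ) (hℓ : 0 < ℓ) : lt a b := by
  obtain ⟨m, rfl⟩ : ∃ m : ℕ, ℓ = (m : ℤ) + 1 := ⟨(ℓ - 1).toNat, by omega⟩
  have key : a + (m + 1) • cneg c = b + (m + 1) • cpos c := by
    ext i
    have h1 : ((c i).toNat : ℤ) - ((-(c i)).toNat : ℤ) = c i := by omega
    have h2 := hd i
    have h3 : ((m : ℤ) + 1) * (c i) =
        ((m : ℤ) + 1) * ((c i).toNat) - ((m : ℤ) + 1) * ((-(c i)).toNat) := by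
      rw [← mul_sub, h1]
    have goal' : (a i : ℤ) + ((m : ℤ) + 1) * ((-(c i)).toNat)
        = (b i : ℤ) + ((m : ℤ) + 1) * ((c i).toNat) := by linarith
    have goal2 : a i + (m + 1) * ((-(c i)).toNat) = b i + (m + 1) * ((c i).toNat) := by
      exact_mod_cast goal'
    simp only [Finsupp.add_apply, Finsupp.smul_apply, smul_eq_mul, cpos, cneg,
      Finsupp.equivFunOnFinite_symm_apply_apply]
    exact goal2
  have h3 : lt (cpos c + b) (cneg c + b) := h.2.2.2.2 _ _ b hlo
  have h4 : lt ((m + 1) • cpos c + b) ((m + 1) • cneg c + b) :=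
    h.2.2.2.2 _ _ b (to_smul_lt h hlo m)
  have h5 : lt (b + (m + 1) • cpos c) (b + (m + 1) • cneg c) := by
    rwa [add_comm b, add_comm b]
  rw [← key] at h5
  exact to_cancel h h5

private lemma cpos_neg {n : ℕ} (c : Fin n → ℤ) : cpos (fun i => -(c i)) = cneg c := rfl

private lemma cneg_neg {n : ℕ} (c : Fin n → ℤ) : cneg (fun i => -(c i)) = cpos c := by
  unfold cpos cneg
  congr 1
  funext i
  simp

private lemma dist_lt'_aux {n : ℕ} {c : Fin n → ℤ} {lt' : (Fin n →₀ ℕ) → (Fin n →₀ ℕ) → Prop}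
    (h : IsTermOrder n lt') (hlo' : lt' (cneg c) (cpos c)) {a b : Fin n →₀ ℕ} {ℓ : ℤ}
    (hd : DistRel c a b ℓ) (hℓ : 0 < ℓ) : lt' b a := by
  have hd' : DistRel (fun i => -(c i)) b a ℓ := by
    intro i
    have := hd i
    simp only
    linarith [this]
  have hlo2 : lt' (cpos (fun i => -(c i))) (cneg (fun i => -(c i))) := by
    rw [cpos_neg, cneg_neg]; exact hlo'
  exact dist_lt h hlo2 hd' hℓ

/-- Classification of same-degree monomial pairs by the sign of `ℓ`. -/
private lemma dist_sign {n : ℕ} {c : Fin n → ℤ} {lt lt' : (Fin n →₀ ℕ) → (Fin n →₀ ℕ) → Prop}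
    (hlt : IsTermOrder n lt) (hlt' : IsTermOrder n lt')
    (hlo : lt (cpos c) (cneg c)) (hlo' : lt' (cneg c) (cpos c))
    {a b : Fin n →₀ ℕ} {ℓ : ℤ} (hd : DistRel c a b ℓ) :
    (ℓ = 0 ∧ a = b) ∨ (0 < ℓ ∧ lt a b ∧ lt' b a) ∨ (ℓ < 0 ∧ lt b a ∧ lt' a b) := by
  rcases lt_trichotomy ℓ 0 with h | h | h
  · refine Or.inr (Or.inr ⟨h, ?_, ?_⟩)
    · have hd' : DistRel c b a (-ℓ) := by
        intro i; have := hd i; linarith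
      exact dist_lt hlt hlo hd' (by omega)
    · have hd' : DistRel c b a (-ℓ) := by
        intro i; have := hd i; linarith
      exact dist_lt'_aux hlt' hlo' hd' (by omega)
  · refine Or.inl ⟨h, ?_⟩
    ext i
    have := hd i
    rw [h] at this
    omega
  · exact Or.inr (Or.inl ⟨h, dist_lt hlt hlo hd h, dist_lt'_aux hlt' hlo' hd h⟩)

private lemma exists_pos_coord {n : ℕ} {c : Fin n → ℤ} (hcp : cpos c ≠ 0) : ∃ i, 0 < c i := by
  by_contra h
  push_neg at h
  apply hcp
  ext i
  simp only [cpos, Finsupp.equivFunOnFinite_symm_apply_apply, Finsupp.coe_zero, Pi.zero_apply]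
  have := h i
  omega

private lemma exists_neg_coord {n : ℕ} {c : Fin n → ℤ} (hcn : cneg c ≠ 0) : ∃ j, c j < 0 := by
  by_contra h
  push_neg at h
  apply hcn
  ext j
  simp only [cneg, Finsupp.equivFunOnFinite_symm_apply_apply, Finsupp.coe_zero, Pi.zero_apply]
  have := h j
  omega

private lemma dist_unique {n : ℕ} {c : Fin n → ℤ} (hc : ∃ i, c i ≠ 0) {a b : Fin n →₀ ℕ}
    {ℓ ℓ' : ℤ} (h1 : DistRel c a b ℓ) (h2 : DistRel c a b ℓ') : ℓ = ℓ' := by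
  obtain ⟨i, hi⟩ := hc
  have e1 := h1 i
  have e2 := h2 i
  have : ℓ * c i = ℓ' * c i := by linarith
  exact mul_right_cancel₀ hi this

private lemma finset_exists_max {α : Type*} (lt : α → α → Prop)
    (htot : ∀ u v, lt u v ∨ u = v ∨ lt v u)
    (htrans : ∀ u v w, lt u v → lt v w → lt u w)
    (s : Finset α) (hs : s.Nonempty) : ∃ m ∈ s, ∀ x ∈ s, x ≠ m → lt x m := by
  classical
  induction s using Finset.induction_on with
  | empty => simp at hs
  | @insert a s ha ih =>
    rcases s.eq_empty_or_nonempty with rfl | hs'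
    · exact ⟨a, by simp, by simp⟩
    · obtain ⟨m, hm, hmax⟩ := ih hs'
      rcases htot a m with h | heq | h
      · refine ⟨m, Finset.mem_insert_of_mem hm, ?_⟩
        intro x hx hxm
        rcases Finset.mem_insert.mp hx with rfl | hx'
        · exact h
        · exact hmax x hx' hxm
      · subst heq
        refine ⟨a, Finset.mem_insert_self a s, ?_⟩
        intro x hx hxm
        rcases Finset.mem_insert.mp hx with rfl | hx'
        · exact absurd rfl hxm
        · exact hmax x hx' hxm
      · refine ⟨a, Finset.mem_insert_self a s, ?_⟩
        intro x hx hxa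
        rcases Finset.mem_insert.mp hx with rfl | hx'
        · exact absurd rfl hxa
        · rcases eq_or_ne x m with rfl | hxm
          · exact h
          · exact htrans _ _ _ (hmax x hx' hxm) h

/-- If `v` is the `lt'`-leading exponent of `s` and `w ∈ supp s` with `w - v = ℓ·c`,
then `ℓ ≤ 0`. -/
private lemma ell_nonpos {n : ℕ} {K : Type*} [Field K] {c : Fin n → ℤ}
    {lt lt' : (Fin n →₀ ℕ) → (Fin n →₀ ℕ) → Prop}
    (hlt : IsTermOrder n lt) (hlt' : IsTermOrder n lt')
    (hlo : lt (cpos c) (cneg c)) (hlo' : lt' (cneg c) (cpos c))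
    {s : MvPolynomial (Fin n) K} {w v : Fin n →₀ ℕ} {ℓ : ℤ}
    (hsv : IsLeadExp lt' s v) (hw : w ∈ s.support) (hd : DistRel c w v ℓ) : ℓ ≤ 0 := by
  rcases dist_sign hlt hlt' hlo hlo' hd with ⟨h0, _⟩ | ⟨h0, _, hba⟩ | ⟨h0, _, _⟩
  · omega
  · exfalso
    by_cases hwv : w = v
    · rw [hwv] at hba; exact hlt'.2.2.1 v hba
    · exact to_asymm hlt' (hsv.2 w hw hwv) hba
  · omega

/-- The core induction: given homogeneous `p ∈ I` with `lt`-lead `u` and `lt'`-lead `v`,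
produce `ut ⪯ u` in `Mon M` with `f ut = v`, by descending induction on the distance
measure `v j - ℓu`. -/
private lemma main_aux {n : ℕ} {K : Type*} [Field K] (c : Fin n → ℤ)
    (lt lt' : (Fin n →₀ ℕ) → (Fin n →₀ ℕ) → Prop)
    (hlt : IsTermOrder n lt) (hlt' : IsTermOrder n lt')
    (hlo : lt (cpos c) (cneg c)) (hlo' : lt' (cneg c) (cpos c))
    (j : Fin n) (hj : c j < 0)
    (I : Ideal (MvPolynomial (Fin n) K)) (M : Ideal (MvPolynomial (Fin n) K))
    (hM : M = initialIdeal lt I)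
    (f : (Fin n →₀ ℕ) → (Fin n →₀ ℕ))
    (hf : ∀ u ∈ Mon M, MaxOppLead c lt lt' I u (f u))
    (v : Fin n →₀ ℕ) :
    ∀ d : ℕ, ∀ p ∈ I, CHom c p → ∀ u : Fin n →₀ ℕ, ∀ ℓu : ℤ,
      IsLeadExp lt p u → IsLeadExp lt' p v → DistRel c u v ℓu → (v j : ℤ) - ℓu ≤ (d : ℤ) →
      ∃ ut ∈ Mon M, (ut = u ∨ lt ut u) ∧ f ut = v := by
  intro d
  induction d using Nat.strong_induction_on with
  | _ d IH =>
  intro p hp hph u ℓu hpu hpv hdu hbound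
  have hu : u ∈ Mon M := by
    rw [hM, Mon]
    exact Ideal.subset_span ⟨p, hp, u, hpu, rfl⟩
  rcases (hf u hu).2 v ⟨p, hp, hph, hpu, hpv⟩ with heq | hvlt
  · exact ⟨u, hu, Or.inl rfl, heq.symm⟩
  · obtain ⟨q, hq, hqh, hqu, hqv⟩ := (hf u hu).1
    -- the cancellation polynomial
    set r : MvPolynomial (Fin n) K := C (q.coeff u) * p - C (p.coeff u) * q with hr
    have hrI : r ∈ I := Ideal.sub_mem I (Ideal.mul_mem_left I _ hp) (Ideal.mul_mem_left I _ hq)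
    have hcoeff : ∀ w, r.coeff w = q.coeff u * p.coeff w - p.coeff u * q.coeff w := by
      intro w
      simp [hr, coeff_sub, coeff_C_mul]
    have hsupp : ∀ w ∈ r.support, w ∈ p.support ∨ w ∈ q.support := by
      intro w hw
      by_contra hcon
      push_neg at hcon
      have h1 : p.coeff w = 0 := notMem_support_iff.mp hcon.1
      have h2 : q.coeff w = 0 := notMem_support_iff.mp hcon.2
      have := mem_support_iff.mp hw
      rw [hcoeff, h1, h2] at this
      simp at this
    -- v and f u have the same degree
    have hsd : SameDeg c v (f u) := by
      obtain ⟨ℓ1, h1⟩ := hph v hpv.1 u hpu.1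
      obtain ⟨ℓ2, h2⟩ := hqh u hqu.1 (f u) hqv.1
      refine ⟨ℓ1 + ℓ2, fun i => ?_⟩
      have e1 := h1 i
      have e2 := h2 i
      have e3 : (ℓ1 + ℓ2) * c i = ℓ1 * c i + ℓ2 * c i := by ring
      linarith
    obtain ⟨ℓ0, hℓ0⟩ := hsd
    -- since lt v (f u), we get lt' (f u) v
    have hfu_v : lt' (f u) v := by
      rcases dist_sign hlt hlt' hlo hlo' hℓ0 with ⟨h0, heq⟩ | ⟨h0, _, hba⟩ | ⟨h0, hba, _⟩
      · rw [heq] at hvlt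
        exact absurd hvlt (hlt.2.2.1 _)
      · exact hba
      · exact absurd hvlt (fun h => to_asymm hlt h hba)
    -- v is not in the support of q
    have hvq : v ∉ q.support := by
      intro hvq
      have hne : v ≠ f u := fun h => hlt.2.2.1 (f u) (h ▸ hvlt)
      exact to_asymm hlt' (hqv.2 v hvq hne) hfu_v
    -- v is in the support of r
    have hvr : v ∈ r.support := by
      rw [mem_support_iff, hcoeff]
      have h1 : q.coeff u ≠ 0 := mem_support_iff.mp hqu.1
      have h2 : p.coeff v ≠ 0 := mem_support_iff.mp hpv.1
      have h3 : q.coeff v = 0 := notMem_support_iff.mp hvq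
      rw [h3]
      simpa using mul_ne_zero h1 h2
    -- u is not in the support of r
    have hur : u ∉ r.support := by
      simp only [mem_support_iff, ne_eq, not_not, hcoeff u]
      ring
    -- everything in supp r is lt-below u
    have hrlt : ∀ w ∈ r.support, lt w u := by
      intro w hw
      have hwne : w ≠ u := fun h => hur (h ▸ hw)
      rcases hsupp w hw with h | h
      · exact hpu.2 w h hwne
      · exact hqu.2 w h hwne
    -- r is homogeneous
    have hrh : CHom c r := by
      intro a ha b hb
      have key : ∀ w ∈ r.support, SameDeg c w u := by
        intro w hw
        rcases hsupp w hw with h | h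
        · exact hph w h u hpu.1
        · exact hqh w h u hqu.1
      obtain ⟨ℓ1, h1⟩ := key a ha
      obtain ⟨ℓ2, h2⟩ := key b hb
      refine ⟨ℓ1 - ℓ2, fun i => ?_⟩
      have e1 := h1 i
      have e2 := h2 i
      have e3 : (ℓ1 - ℓ2) * c i = ℓ1 * c i - ℓ2 * c i := by ring
      linarith
    -- the lt-leading exponent of r
    obtain ⟨u₁, hu₁r, hu₁max⟩ := finset_exists_max lt hlt.1 hlt.2.1 r.support ⟨v, hvr⟩
    have hru₁ : IsLeadExp lt r u₁ := ⟨hu₁r, hu₁max⟩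
    -- the lt'-leading exponent of r is v
    have hrv : IsLeadExp lt' r v := by
      refine ⟨hvr, fun w hw hwv => ?_⟩
      rcases hsupp w hw with h | h
      · exact hpv.2 w h hwv
      · rcases eq_or_ne w (f u) with rfl | hne
        · exact hfu_v
        · exact hlt'.2.1 _ _ _ (hqv.2 w h hne) hfu_v
    have hlt_u₁ : lt u₁ u := hrlt u₁ hu₁r
    obtain ⟨ℓ₁, hℓ₁⟩ : SameDeg c u₁ v := hrh u₁ hu₁r v hvr
    -- ℓ₁ > ℓu
    have hd₁u : DistRel c u₁ u (ℓ₁ - ℓu) := by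
      intro i
      have e1 := hℓ₁ i
      have e2 := hdu i
      have e3 : (ℓ₁ - ℓu) * c i = ℓ₁ * c i - ℓu * c i := by ring
      linarith
    have hstep : ℓu < ℓ₁ := by
      rcases dist_sign hlt hlt' hlo hlo' hd₁u with ⟨h0, heq⟩ | ⟨h0, _, _⟩ | ⟨h0, hba, _⟩
      · rw [heq] at hlt_u₁
        exact absurd hlt_u₁ (hlt.2.2.1 _)
      · omega
      · exact absurd hlt_u₁ (fun h => to_asymm hlt h hba)
    -- ℓ₁ ≤ v j (upper bound from nonnegativity of u₁ j)
    have hub : ℓ₁ ≤ (v j : ℤ) := by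
      by_contra hcon
      push_neg at hcon
      have h1 := hℓ₁ j
      have h2 : ℓ₁ * c j ≤ -ℓ₁ := by
        have := mul_le_mul_of_nonneg_left (show c j ≤ -1 by omega) (show (0:ℤ) ≤ ℓ₁ by omega)
        linarith
      have h3 : (0:ℤ) ≤ (u₁ j : ℤ) := Int.natCast_nonneg _
      linarith
    have hd1 : 1 ≤ d := by omega
    obtain ⟨ut, hutM, hutle, hfut⟩ :=
      IH (d - 1) (by omega) r hrI hrh u₁ ℓ₁ hru₁ hrv hℓ₁ (by omega)
    refine ⟨ut, hutM, Or.inr ?_, hfut⟩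
    rcases hutle with rfl | h
    · exact hlt_u₁
    · exact hlt.2.1 _ _ _ h hlt_u₁

/-- (Fact (†) in the proof of Proposition 3.2.) If `f` is the map
`m ↦ max_≺ { in_≺'(p) : p ∈ I homogeneous, in_≺(p) = m }`, and `p ∈ I` is homogeneous
with `in_≺(p) = x^u` and `in_≺'(p) = x^v`, then there is `x^ũ ∈ Mon M` with `ũ ⪯ u` and
`f(ũ) = v`; in particular `d(ũ, v) ≤ d(u, v)`. -/
theorem exists_smaller_with_maxOppLead {n : ℕ} {K : Type*} [Field K] (c : Fin n → ℤ)
    (hcp : cpos c ≠ 0) (hcn : cneg c ≠ 0)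
    (lt lt' : (Fin n →₀ ℕ) → (Fin n →₀ ℕ) → Prop)
    (hlt : IsTermOrder n lt) (hlt' : IsTermOrder n lt')
    (hlo : lt (cpos c) (cneg c)) (hlo' : lt' (cneg c) (cpos c))
    (I : Ideal (MvPolynomial (Fin n) K)) (hI : CHomIdeal c I)
    (M N : Ideal (MvPolynomial (Fin n) K))
    (hM : M = initialIdeal lt I) (hN : N = initialIdeal lt' I)
    (f : (Fin n →₀ ℕ) → (Fin n →₀ ℕ))
    (hf : ∀ u ∈ Mon M, MaxOppLead c lt lt' I u (f u))
    (p : MvPolynomial (Fin n) K) (hp : p ∈ I) (hph : CHom c p)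
    (u v : Fin n →₀ ℕ) (hpu : IsLeadExp lt p u) (hpv : IsLeadExp lt' p v) :
    ∃ ut ∈ Mon M, (ut = u ∨ lt ut u) ∧ f ut = v ∧
      ∀ ℓ ℓ' : ℤ, DistRel c ut v ℓ → DistRel c u v ℓ' → |ℓ| ≤ |ℓ'| := by
  obtain ⟨i0, hi0⟩ := exists_pos_coord hcp
  obtain ⟨j, hj⟩ := exists_neg_coord hcn
  have hc0 : ∃ i, c i ≠ 0 := ⟨i0, by omega⟩
  obtain ⟨ℓu, hdu⟩ : SameDeg c u v := hph u hpu.1 v hpv.1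
  obtain ⟨ut, hutM, hutle, hfut⟩ :=
    main_aux c lt lt' hlt hlt' hlo hlo' j hj I M hM f hf v ((v j : ℤ) - ℓu).toNat
      p hp hph u ℓu hpu hpv hdu (by omega)
  refine ⟨ut, hutM, hutle, hfut, ?_⟩
  intro ℓ ℓ' hd hd'
  have hmax := hf ut hutM
  rw [hfut] at hmax
  obtain ⟨s, hsI, hsh, hsu, hsv⟩ := hmax.1
  have hℓ : ℓ ≤ 0 := ell_nonpos hlt hlt' hlo hlo' hsv hsu.1 hd
  have hℓ' : ℓ' ≤ 0 := ell_nonpos hlt hlt' hlo hlo' hpv hpu.1 hd'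
  have hdiff : DistRel c ut u (ℓ - ℓ') := by
    intro i
    have e1 := hd i
    have e2 := hd' i
    have e3 : (ℓ - ℓ') * c i = ℓ * c i - ℓ' * c i := by ring
    linarith
  have hge : ℓ' ≤ ℓ := by
    rcases hutle with rfl | h
    · have := dist_unique hc0 hd hd'
      omega
    · rcases dist_sign hlt hlt' hlo hlo' hdiff with ⟨h0, _⟩ | ⟨h0, _, _⟩ | ⟨h0, hba, _⟩
      · omega
      · omega
      · exact absurd h (fun hh => to_asymm hlt hh hba)
  rw [abs_of_nonpos hℓ, abs_of_nonpos hℓ']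
  omega
end Helpers
end

section
/- Let K be a field and c ∈ ℕⁿ. Let f ∈ S = K[x₁,…,xₙ] be nonzero and homogeneous with respect to the ℤⁿ/ℤc-grading, written f = Σ_{i=0}^{s} λ_i x^{u+ic} with λ₀ ≠ 0 and λ_s ≠ 0. Then in_≺(f) = x^{u+sc} for every term order ≺. Consequently, for an ideal I homogeneous with respect to this grading, the initial ideal in_≺(I) is the same for all term orders ≺. -/
open MvPolynomial

-- ===== auxiliary development =====
open scoped Classical

section Aux
variable {n : ℕ} {K : Type*} [Field K]

lemma sameDeg_refl (c : Fin n → ℤ) (u : Fin n →₀ ℕ) : SameDeg c u u :=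
  ⟨0, fun i => by simp [DistRel]⟩

lemma sameDeg_symm {c : Fin n → ℤ} {u v : Fin n →₀ ℕ} (h : SameDeg c u v) : SameDeg c v u := by
  obtain ⟨l, hl⟩ := h
  exact ⟨-l, fun i => by rw [neg_mul, ← hl i]; ring⟩

lemma sameDeg_trans {c : Fin n → ℤ} {u v w : Fin n →₀ ℕ} (h1 : SameDeg c u v)
    (h2 : SameDeg c v w) : SameDeg c u w := by
  obtain ⟨l1, hl1⟩ := h1; obtain ⟨l2, hl2⟩ := h2
  exact ⟨l1 + l2, fun i => by rw [add_mul, ← hl1 i, ← hl2 i]; ring⟩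

lemma sameDeg_add_right {c : Fin n → ℤ} {u v : Fin n →₀ ℕ} (w : Fin n →₀ ℕ) :
    SameDeg c (u + w) (v + w) ↔ SameDeg c u v := by
  constructor <;> rintro ⟨l, hl⟩ <;> refine ⟨l, fun i => ?_⟩ <;> have h := hl i <;>
    simp only [Finsupp.add_apply, Nat.cast_add] at h ⊢ <;> linarith

lemma termOrder_lt_add {lt : (Fin n →₀ ℕ) → (Fin n →₀ ℕ) → Prop} (h : IsTermOrder n lt)
    (w m : Fin n →₀ ℕ) (hm : m ≠ 0) : lt w (w + m) := by
  have := h.2.2.2.2 0 m w (h.2.2.2.1 m hm)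
  rwa [zero_add, add_comm m w] at this

/-- The coefficient vector `c` as a `Finsupp`. -/
noncomputable def cfin (c : Fin n → ℕ) : Fin n →₀ ℕ := Finsupp.equivFunOnFinite.symm c

lemma cfin_apply (c : Fin n → ℕ) (j : Fin n) : cfin c j = c j := rfl

lemma eq_add_smul {c : Fin n → ℕ} {u w : Fin n →₀ ℕ} {l : ℤ} (hl : 0 ≤ l)
    (h : DistRel (fun i => (c i : ℤ)) u w l) : u = w + l.toNat • cfin c := by
  ext i
  have hi := h i
  have hgoal : ((u i : ℤ)) = ((w i + l.toNat • (cfin c) i : ℕ) : ℤ) := by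
    push_cast [cfin_apply, smul_eq_mul]
    rw [Int.toNat_of_nonneg hl]
    linarith
  have h2 : (u i : ℤ) = (((w + l.toNat • cfin c) i : ℕ) : ℤ) := by
    rw [Finsupp.add_apply, Finsupp.smul_apply]; exact_mod_cast hgoal
  exact_mod_cast h2

lemma leadExp_indep {c : Fin n → ℕ} {g : MvPolynomial (Fin n) K} {u : Fin n →₀ ℕ}
    {lt₁ lt₂ : (Fin n →₀ ℕ) → (Fin n →₀ ℕ) → Prop}
    (h1 : IsTermOrder n lt₁) (h2 : IsTermOrder n lt₂)
    (hg : CHom (fun i => (c i : ℤ)) g) (hl : IsLeadExp lt₁ g u) : IsLeadExp lt₂ g u := by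
  refine ⟨hl.1, fun w hw hwu => ?_⟩
  obtain ⟨l, hlrel⟩ := hg u hl.1 w hw
  rcases le_or_gt 0 l with hle | hlt
  · have heq := eq_add_smul hle hlrel
    have hm : l.toNat • cfin c ≠ 0 := by
      intro h0
      apply hwu
      rw [heq, h0, add_zero]
    rw [heq]; exact termOrder_lt_add h2 w _ hm
  · have hrel' : DistRel (fun i => (c i : ℤ)) w u (-l) := fun i => by
      rw [neg_mul, ← hlrel i]; ring
    have heq := eq_add_smul (by linarith) hrel'
    have hm : (-l).toNat • cfin c ≠ 0 := by
      intro h0; exact hwu (by rw [heq, h0, add_zero])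
    have hlt1 : lt₁ u w := by rw [heq]; exact termOrder_lt_add h1 u _ hm
    exact absurd (h1.2.1 _ _ _ (hl.2 w hw hwu) hlt1) (h1.2.2.1 w)

/-- The homogeneous component of `f` in the degree class of `u`, shifted by `w`. -/
noncomputable def homCompW (c : Fin n → ℕ) (u w : Fin n →₀ ℕ)
    (f : MvPolynomial (Fin n) K) : MvPolynomial (Fin n) K :=
  AddMonoidAlgebra.ofCoeff (Finsupp.filter (fun t => SameDeg (fun i => (c i : ℤ)) (t + w) u) (AddMonoidAlgebra.coeff f))

/-- The homogeneous component of `f` in the degree class of `u`. -/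
noncomputable def homComp (c : Fin n → ℕ) (u : Fin n →₀ ℕ) (f : MvPolynomial (Fin n) K) :
    MvPolynomial (Fin n) K :=
  AddMonoidAlgebra.ofCoeff (Finsupp.filter (fun t => SameDeg (fun i => (c i : ℤ)) t u) (AddMonoidAlgebra.coeff f))

lemma coeff_homComp (c : Fin n → ℕ) (u w : Fin n →₀ ℕ) (f : MvPolynomial (Fin n) K) :
    coeff w (homComp c u f) =
      if SameDeg (fun i => (c i : ℤ)) w u then coeff w f else 0 := rfl

lemma coeff_homCompW (c : Fin n → ℕ) (u w t : Fin n →₀ ℕ) (f : MvPolynomial (Fin n) K) :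
    coeff t (homCompW c u w f) =
      if SameDeg (fun i => (c i : ℤ)) (t + w) u then coeff t f else 0 := rfl

lemma support_homComp (c : Fin n → ℕ) (u : Fin n →₀ ℕ) (f : MvPolynomial (Fin n) K) :
    (homComp c u f).support =
      {x ∈ f.support | SameDeg (fun i => (c i : ℤ)) x u} := rfl

lemma support_homCompW (c : Fin n → ℕ) (u w : Fin n →₀ ℕ) (f : MvPolynomial (Fin n) K) :
    (homCompW c u w f).support =
      {x ∈ f.support | SameDeg (fun i => (c i : ℤ)) (x + w) u} := rfl

lemma homComp_add (c : Fin n → ℕ) (u : Fin n →₀ ℕ) (f g : MvPolynomial (Fin n) K) :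
    homComp c u (f + g) = homComp c u f + homComp c u g := by
  apply MvPolynomial.ext; intro t
  rw [coeff_add, coeff_homComp, coeff_homComp, coeff_homComp, coeff_add]
  split_ifs <;> simp

lemma homComp_zero (c : Fin n → ℕ) (u : Fin n →₀ ℕ) :
    homComp c u (0 : MvPolynomial (Fin n) K) = 0 := by
  apply MvPolynomial.ext; intro t
  rw [coeff_homComp]; simp


lemma homComp_coeff_ne {c : Fin n → ℕ} {u w : Fin n →₀ ℕ} {f : MvPolynomial (Fin n) K}
    (h : coeff w (homComp c u f) ≠ 0) :
    coeff w f ≠ 0 ∧ SameDeg (fun i => (c i : ℤ)) w u := by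
  rw [coeff_homComp] at h
  by_cases hs : SameDeg (fun i => (c i : ℤ)) w u
  · rw [if_pos hs] at h; exact ⟨h, hs⟩
  · rw [if_neg hs] at h; exact absurd rfl h

lemma homCompW_coeff_ne {c : Fin n → ℕ} {u w t : Fin n →₀ ℕ} {f : MvPolynomial (Fin n) K}
    (h : coeff t (homCompW c u w f) ≠ 0) :
    coeff t f ≠ 0 ∧ SameDeg (fun i => (c i : ℤ)) (t + w) u := by
  rw [coeff_homCompW] at h
  by_cases hs : SameDeg (fun i => (c i : ℤ)) (t + w) u
  · rw [if_pos hs] at h; exact ⟨h, hs⟩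
  · rw [if_neg hs] at h; exact absurd rfl h

lemma homComp_mem {c : Fin n → ℕ} {G : Set (MvPolynomial (Fin n) K)}
    (hG : ∀ g ∈ G, CHom (fun i => (c i : ℤ)) g) {f : MvPolynomial (Fin n) K}
    (hf : f ∈ Ideal.span G) (u : Fin n →₀ ℕ) : homComp c u f ∈ Ideal.span G := by
  refine Submodule.span_induction (p := fun x _ => ∀ u, homComp c u x ∈ Ideal.span G)
    ?_ ?_ ?_ ?_ hf u
  · -- generators
    intro g hg u
    rcases eq_or_ne (homComp c u g) 0 with h0 | h0
    · rw [h0]; exact Ideal.zero_mem _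
    · obtain ⟨w₀, hw₀c⟩ := MvPolynomial.ne_zero_iff.mp h0
      have hw₀ := homComp_coeff_ne hw₀c
      rw [← MvPolynomial.mem_support_iff] at hw₀
      have hgu : homComp c u g = g := by
        apply MvPolynomial.ext; intro t
        rw [coeff_homComp]
        split_ifs with ht
        · rfl
        · symm; rw [← MvPolynomial.notMem_support_iff]
          intro htsupp
          exact ht (sameDeg_trans (hG g hg t htsupp w₀ hw₀.1) hw₀.2)
      rw [hgu]; exact Ideal.subset_span hg
  · intro u
    rw [homComp_zero]; exact Ideal.zero_mem _
  · intro x y _ _ hx hy u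
    rw [homComp_add]; exact Ideal.add_mem _ (hx u) (hy u)
  · intro a x _ hx
    rw [smul_eq_mul]
    induction a using MvPolynomial.induction_on' with
    | monomial w aw =>
        intro u
        have key : homComp c u (monomial w aw * x) = monomial w aw * homCompW c u w x := by
          apply MvPolynomial.ext; intro t
          rw [coeff_homComp, coeff_monomial_mul', coeff_monomial_mul']
          by_cases hle : w ≤ t
          · rw [if_pos hle, if_pos hle, coeff_homCompW, tsub_add_cancel_of_le hle]
            split_ifs with h
            · rfl
            · rw [mul_zero]
          · rw [if_neg hle, if_neg hle, ite_self]
        rw [key]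
        rcases eq_or_ne (homCompW c u w x) 0 with h0 | h0
        · rw [h0, mul_zero]; exact Ideal.zero_mem _
        · obtain ⟨t₀, ht₀c⟩ := MvPolynomial.ne_zero_iff.mp h0
          have ht₀ := homCompW_coeff_ne ht₀c
          have hgc : homCompW c u w x = homComp c t₀ x := by
            apply MvPolynomial.ext; intro t
            rw [coeff_homCompW, coeff_homComp]
            refine if_congr ⟨fun h => ?_, fun h => ?_⟩ rfl rfl
            · exact (sameDeg_add_right w).mp (sameDeg_trans h (sameDeg_symm ht₀.2))
            · exact sameDeg_trans ((sameDeg_add_right w).mpr h) ht₀.2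
          rw [hgc]
          exact Ideal.mul_mem_left _ _ (hx t₀)
    | add p q hp hq =>
        intro u
        rw [add_mul, homComp_add]
        exact Ideal.add_mem _ (hp u) (hq u)

lemma initial_le {c : Fin n → ℕ} {lt₁ lt₂ : (Fin n →₀ ℕ) → (Fin n →₀ ℕ) → Prop}
    (h1 : IsTermOrder n lt₁) (h2 : IsTermOrder n lt₂)
    {I : Ideal (MvPolynomial (Fin n) K)} (hI : CHomIdeal (fun i => (c i : ℤ)) I) :
    initialIdeal lt₁ I ≤ initialIdeal lt₂ I := by
  obtain ⟨G, hG, hIG⟩ := hI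
  rw [initialIdeal, initialIdeal]
  refine Ideal.span_le.mpr ?_
  rintro p ⟨f, hfI, u, hlead, rfl⟩
  set g := homComp c u f with hgdef
  have hgI : g ∈ I := by rw [hIG]; exact homComp_mem hG (hIG ▸ hfI) u
  have hgu : u ∈ g.support := by
    rw [MvPolynomial.mem_support_iff, hgdef, coeff_homComp,
      if_pos (sameDeg_refl _ u)]
    exact MvPolynomial.mem_support_iff.mp hlead.1
  have hsub : ∀ t ∈ g.support, t ∈ f.support ∧ SameDeg (fun i => (c i : ℤ)) t u := by
    intro t ht
    rw [hgdef, support_homComp, Finset.mem_filter] at ht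
    exact ht
  have hlead1 : IsLeadExp lt₁ g u :=
    ⟨hgu, fun w hw hwu => hlead.2 w (hsub w hw).1 hwu⟩
  have hchom : CHom (fun i => (c i : ℤ)) g := fun a ha b hb =>
    sameDeg_trans (hsub a ha).2 (sameDeg_symm (hsub b hb).2)
  exact Ideal.subset_span ⟨g, hgI, u, leadExp_indep h1 h2 hchom hlead1, rfl⟩

end Aux

/-- For `c ∈ ℕⁿ` (a non-positive grading), a nonzero
`ℤⁿ/ℤc`-homogeneous polynomial `f = Σ_{i=0}^{s} λ_i x^{u+ic}` (with `λ₀, λ_s ≠ 0`) has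
`in_≺(f) = x^{u+sc}` for *every* term order `≺`.  Consequently a homogeneous ideal has
the same initial ideal for all term orders. -/
theorem initial_of_cHomogeneous_nonneg {n : ℕ} {K : Type*} [Field K] (c : Fin n → ℕ)
    (s : ℕ) (lam : ℕ → K) (v : ℕ → (Fin n →₀ ℕ))
    (hv : ∀ i ≤ s, ∀ j : Fin n, v i j = v 0 j + i * c j)
    (h0 : lam 0 ≠ 0) (hs : lam s ≠ 0)
    (f : MvPolynomial (Fin n) K)
    (hf : f = ∑ i ∈ Finset.range (s + 1), monomial (v i) (lam i)) (hf0 : f ≠ 0) :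
    (∀ lt, IsTermOrder n lt → IsLeadExp lt f (v s)) ∧
    (∀ lt₁ lt₂, IsTermOrder n lt₁ → IsTermOrder n lt₂ →
      ∀ I : Ideal (MvPolynomial (Fin n) K), CHomIdeal (fun i => (c i : ℤ)) I →
        initialIdeal lt₁ I = initialIdeal lt₂ I) := by
  constructor
  · intro lt hlt
    by_cases hc : cfin c = 0
    · have hv0 : ∀ i ≤ s, v i = v 0 := by
        intro i hi
        ext j
        have hcj : c j = 0 := by
          have := DFunLike.congr_fun hc j
          rwa [cfin_apply, Finsupp.zero_apply] at this
        rw [hv i hi j, hcj, Nat.mul_zero, Nat.add_zero]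
      have hfm : f = monomial (v 0) (∑ i ∈ Finset.range (s + 1), lam i) := by
        rw [hf, map_sum]
        exact Finset.sum_congr rfl fun i hi => by
          rw [hv0 i (Nat.lt_succ_iff.mp (Finset.mem_range.mp hi))]
      have hsum : (∑ i ∈ Finset.range (s + 1), lam i) ≠ 0 := by
        intro h; apply hf0; rw [hfm, h, map_zero]
      have hsupp : f.support = {v 0} := by
        rw [hfm, support_monomial, if_neg hsum]
      constructor
      · rw [hsupp, hv0 s le_rfl]; exact Finset.mem_singleton_self _
      · intro w hw hwne
        rw [hsupp, Finset.mem_singleton] at hw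
        exact absurd (hw.trans (hv0 s le_rfl).symm) hwne
    · obtain ⟨j0, hj0⟩ : ∃ j, c j ≠ 0 := by
        by_contra hh
        push_neg at hh
        apply hc
        ext j
        simp [cfin_apply, hh j]
      have hinj : ∀ i ≤ s, ∀ k ≤ s, v i = v k → i = k := by
        intro i hi k hk he
        have h' := DFunLike.congr_fun he j0
        rw [hv i hi j0, hv k hk j0] at h'
        have h'' := Nat.add_left_cancel h'
        exact Nat.eq_of_mul_eq_mul_right (Nat.pos_of_ne_zero hj0) h''
      have hcoeff : ∀ i ≤ s, coeff (v i) f = lam i := by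
        intro i hi
        rw [hf, coeff_sum, Finset.sum_eq_single i]
        · rw [coeff_monomial, if_pos rfl]
        · intro k hk hki
          rw [coeff_monomial, if_neg]
          intro he
          exact hki (hinj k (Nat.lt_succ_iff.mp (Finset.mem_range.mp hk)) i hi he)
        · intro hnot
          exact absurd (Finset.mem_range.mpr (Nat.lt_succ_of_le hi)) hnot
      have hsupp : f.support ⊆ (Finset.range (s + 1)).image v := by
        rw [hf]
        refine (MvPolynomial.support_sum).trans ?_
        intro t ht
        rw [Finset.mem_biUnion] at ht
        obtain ⟨i, hi, hti⟩ := ht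
        have h' := MvPolynomial.support_monomial_subset hti
        rw [Finset.mem_singleton] at h'
        exact Finset.mem_image.mpr ⟨i, hi, h'.symm⟩
      constructor
      · exact MvPolynomial.mem_support_iff.mpr (by rw [hcoeff s le_rfl]; exact hs)
      · intro w hw hwne
        obtain ⟨j, hj, rfl⟩ := Finset.mem_image.mp (hsupp hw)
        have hjs : j ≤ s := Nat.lt_succ_iff.mp (Finset.mem_range.mp hj)
        have hjlt : j < s := lt_of_le_of_ne hjs (fun h => hwne (by rw [h]))
        have hvs : v s = v j + (s - j) • cfin c := by
          ext i
          rw [Finsupp.add_apply, Finsupp.smul_apply, cfin_apply, smul_eq_mul,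
            hv s le_rfl i, hv j hjs i]
          have hmul : j * c i + (s - j) * c i = s * c i := by
            rw [← add_mul, Nat.add_sub_cancel' hjs]
          rw [← hmul]; ring
        have hm : (s - j) • cfin c ≠ 0 := by
          intro hm0
          have h' := DFunLike.congr_fun hm0 j0
          rw [Finsupp.smul_apply, cfin_apply, smul_eq_mul, Finsupp.zero_apply] at h'
          rcases Nat.mul_eq_zero.mp h' with h | h
          · omega
          · exact hj0 h
        rw [hvs]
        exact termOrder_lt_add hlt _ _ hm
  · intro lt₁ lt₂ h1 h2 I hI
    exact le_antisymm (initial_le h1 h2 hI) (initial_le h2 h1 hI)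
end
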